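/- Uniform Hessian bound (Corollary 2.12). Fix n ≥ 2, constants C_E ≥ 1 and C_S > 0, positive numbers r₀, r₁ with r₁ ≤ r₀ and 3r₀ ≤ 1, a point x₁ ∈ ℝⁿ with ‖x₁‖ = 2r₀, α > 0, and δ > 0 satisfying δ ≤ r₀^{α+2}/α. Set w(x) := ‖x‖^{−α}. Let x_* be a point of the open ball B(x₁, r₁) and let φ₀, φ₁ be C² functions defined on a neighborhood of x_* such that: (a) f := (φ₁ − φ₀) + δ·w has a local maximum at x_*; (b) D²φ₁(x_*) ≥ −C_S·I; (c) there is an n×n symmetric matrix A with (1/C_E)·I ≤ A ≤ C_E·I and trace(A · D²φ₀(x_*)) ≤ 2C_E. Then |D²φ₀|(x_*) + |D²φ₁|(x_*) ≤ C_H, where C_H := 2( C_E²((n−1)(C_S + 1) + 2) + 1 ) depends only on C_E, C_S and n. -/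

import Mathlib

open scoped BigOperators

noncomputable section

abbrev Euc (n : ℕ) := EuclideanSpace ℝ (Fin n)

/-- Second partial derivative `D_{ij}u`. -/
def pd2 (n : ℕ) (i j : Fin n) (u : Euc n → ℝ) (x : Euc n) : ℝ :=
  fderiv ℝ (fun y => fderiv ℝ u y (EuclideanSpace.single j 1)) x (EuclideanSpace.single i 1)

/-- Hessian matrix `D²u`. -/
def hessM (n : ℕ) (u : Euc n → ℝ) (x : Euc n) : Matrix (Fin n) (Fin n) ℝ :=
  Matrix.of fun i j => pd2 n i j u x

/-- `|D²u|(x) = max_{i,j} |D_{ij}u(x)|`. -/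
def hessMax (n : ℕ) (u : Euc n → ℝ) (x : Euc n) : ℝ :=
  ⨆ i : Fin n, ⨆ j : Fin n, |pd2 n i j u x|

section Aux

open Filter Topology Matrix

/-- 1D second-order necessary condition at a local max. -/
lemma snd_deriv_nonpos_at_localMax {g g' : ℝ → ℝ} {c : ℝ}
    (h1 : ∀ᶠ t in 𝓝 (0:ℝ), HasDerivAt g (g' t) t)
    (h2 : HasDerivAt g' c 0) (hmax : IsLocalMax g 0) : c ≤ 0 := by
  by_contra hc
  push_neg at hc
  have hg'0 : g' 0 = 0 := hmax.hasDerivAt_eq_zero h1.self_of_nhds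
  have hslope : Tendsto (fun t => g' t / t) (𝓝[≠] (0:ℝ)) (𝓝 c) := by
    have h := hasDerivAt_iff_tendsto_slope.1 h2
    have heq : (slope g' 0) = fun t => g' t / t := by
      funext t; simp [slope_def_field, hg'0]
    rwa [heq] at h
  have hpos : ∀ᶠ t in 𝓝[>] (0:ℝ), 0 < g' t := by
    have h' : ∀ᶠ t in 𝓝[≠] (0:ℝ), 0 < g' t / t :=
      hslope.eventually (eventually_gt_nhds hc)
    have hsub : 𝓝[>] (0:ℝ) ≤ 𝓝[≠] (0:ℝ) :=
      nhdsWithin_mono 0 fun t ht => ne_of_gt ht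
    filter_upwards [h'.filter_mono hsub, self_mem_nhdsWithin] with t ht ht0
    have ht' : (0:ℝ) < t := ht0
    by_contra hle
    push_neg at hle
    nlinarith [div_nonpos_of_nonpos_of_nonneg hle ht'.le]
  obtain ⟨ε₁, hε₁, h1'⟩ := Metric.eventually_nhds_iff_ball.1 h1
  obtain ⟨ε₂, hε₂, h2'⟩ := Metric.eventually_nhds_iff_ball.1 hmax
  rw [eventually_nhdsWithin_iff] at hpos
  obtain ⟨ε₃, hε₃, h3'⟩ := Metric.eventually_nhds_iff_ball.1 hpos
  set m := min ε₁ (min ε₂ ε₃) with hm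
  have hmpos : 0 < m := by positivity
  set ε := m / 2 with hε
  have hεpos : 0 < ε := by positivity
  have hball : ∀ t ∈ Set.Icc (0:ℝ) ε, t ∈ Metric.ball (0:ℝ) m := by
    intro t ht
    simp only [Metric.mem_ball, Real.dist_eq, sub_zero]
    rw [abs_of_nonneg ht.1]
    linarith [ht.2]
  have hb1 : ∀ t ∈ Set.Icc (0:ℝ) ε, t ∈ Metric.ball (0:ℝ) ε₁ := fun t ht =>
    Metric.ball_subset_ball (min_le_left _ _) (hball t ht)
  have hb2 : ∀ t ∈ Set.Icc (0:ℝ) ε, t ∈ Metric.ball (0:ℝ) ε₂ := fun t ht =>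
    Metric.ball_subset_ball ((min_le_right _ _).trans (min_le_left _ _)) (hball t ht)
  have hb3 : ∀ t ∈ Set.Icc (0:ℝ) ε, t ∈ Metric.ball (0:ℝ) ε₃ := fun t ht =>
    Metric.ball_subset_ball ((min_le_right _ _).trans (min_le_right _ _)) (hball t ht)
  have hmono : StrictMonoOn g (Set.Icc 0 ε) := by
    apply strictMonoOn_of_deriv_pos (convex_Icc 0 ε)
    · intro t ht
      exact ((h1' t (hb1 t ht)).continuousAt).continuousWithinAt
    · intro t ht
      rw [interior_Icc] at ht
      have ht' : t ∈ Set.Icc (0:ℝ) ε := ⟨ht.1.le, ht.2.le⟩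
      rw [(h1' t (hb1 t ht')).deriv]
      exact h3' t (hb3 t ht') ht.1
  have hlt : g 0 < g ε := hmono (Set.left_mem_Icc.2 hεpos.le) (Set.right_mem_Icc.2 hεpos.le) hεpos
  have hle : g ε ≤ g 0 := h2' ε (hb2 ε (Set.right_mem_Icc.2 hεpos.le))
  linarith

lemma euc_sum_single {n : ℕ} (v : Euc n) :
    v = ∑ i : Fin n, v i • EuclideanSpace.single i (1:ℝ) := by
  have := (EuclideanSpace.basisFun (Fin n) ℝ).sum_repr v
  simp only [EuclideanSpace.basisFun_repr, EuclideanSpace.basisFun_apply] at this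
  exact this.symm

lemma diffAt_fderiv {n : ℕ} {u : Euc n → ℝ} {x : Euc n} (hu : ContDiffAt ℝ 2 u x) :
    DifferentiableAt ℝ (fderiv ℝ u) x :=
  (hu.fderiv_right (m := 1) (by norm_num)).differentiableAt (by norm_num)

lemma pd2_eq {n : ℕ} {u : Euc n → ℝ} {x : Euc n} (hu : ContDiffAt ℝ 2 u x) (i j : Fin n) :
    pd2 n i j u x =
      fderiv ℝ (fderiv ℝ u) x (EuclideanSpace.single i 1) (EuclideanSpace.single j 1) := by
  have h2 := diffAt_fderiv hu
  have hc := ((ContinuousLinearMap.apply ℝ ℝ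
      (EuclideanSpace.single j (1:ℝ)) : (Euc n →L[ℝ] ℝ) →L[ℝ] ℝ).hasFDerivAt
      (x := fderiv ℝ u x)).comp x h2.hasFDerivAt
  have h3 : pd2 n i j u x = fderiv ℝ ((ContinuousLinearMap.apply ℝ ℝ
      (EuclideanSpace.single j (1:ℝ))) ∘ (fderiv ℝ u)) x (EuclideanSpace.single i 1) := rfl
  rw [h3, hc.fderiv]
  rfl

lemma pd2_symm {n : ℕ} {u : Euc n → ℝ} {x : Euc n} (hu : ContDiffAt ℝ 2 u x) (i j : Fin n) :
    pd2 n i j u x = pd2 n j i u x := by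
  rw [pd2_eq hu, pd2_eq hu]
  exact (hu.isSymmSndFDerivAt (by simp [minSmoothness_of_isRCLikeNormedField])) _ _

lemma bilin_expand {n : ℕ} (B : Euc n →L[ℝ] Euc n →L[ℝ] ℝ) (v : Euc n) :
    B v v = ∑ i : Fin n, ∑ j : Fin n, v i * v j *
      (B (EuclideanSpace.single i 1) (EuclideanSpace.single j 1)) := by
  conv_lhs => rw [euc_sum_single v]
  simp only [map_sum, _root_.map_smul, ContinuousLinearMap.sum_apply,
    ContinuousLinearMap.smul_apply, smul_eq_mul, Finset.mul_sum]
  rw [Finset.sum_comm]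
  exact Finset.sum_congr rfl fun i _ => Finset.sum_congr rfl fun j _ => by ring

/-- Directional second derivative along a line equals the Hessian quadratic form. -/
lemma line_structure {n : ℕ} {u : Euc n → ℝ} {x : Euc n}
    (hu : ContDiffAt ℝ 2 u x) (v : Euc n) :
    ∃ d : ℝ → ℝ,
      (∀ᶠ t in 𝓝 (0:ℝ), HasDerivAt (fun s => u (x + s • v)) (d t) t) ∧
      HasDerivAt d (∑ i : Fin n, ∑ j : Fin n, v i * v j * pd2 n i j u x) 0 := by
  have hdiff : ∀ᶠ y in 𝓝 x, DifferentiableAt ℝ u y := by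
    filter_upwards [hu.eventually (by norm_num)] with y hy
    exact hy.differentiableAt (by norm_num)
  set L : ℝ → Euc n := fun t => x + t • v with hL
  have hLd : ∀ t, HasDerivAt L v t := fun t => by
    simpa [hL] using ((hasDerivAt_id t).smul_const v).const_add x
  have hL0 : L 0 = x := by simp [hL]
  refine ⟨fun t => fderiv ℝ u (L t) v, ?_, ?_⟩
  · have hLc : ContinuousAt L 0 :=
      (continuous_const.add (continuous_id.smul continuous_const)).continuousAt
    have := hLc.eventually (p := fun y => DifferentiableAt ℝ u y) (by rw [hL0]; exact hdiff)
    filter_upwards [this] with t ht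
    exact ht.hasFDerivAt.comp_hasDerivAt t (hLd t)
  · have hB : HasFDerivAt (fderiv ℝ u) (fderiv ℝ (fderiv ℝ u) x) x :=
      (diffAt_fderiv hu).hasFDerivAt
    have hB' : HasFDerivAt (fderiv ℝ u) (fderiv ℝ (fderiv ℝ u) x) (L 0) := by rwa [hL0]
    have hcomp : HasDerivAt (fun t => fderiv ℝ u (L t)) (fderiv ℝ (fderiv ℝ u) x v) 0 :=
      hB'.comp_hasDerivAt 0 (hLd 0)
    have happ := ((ContinuousLinearMap.apply ℝ ℝ v : (Euc n →L[ℝ] ℝ) →L[ℝ] ℝ).hasFDerivAt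
      (x := fderiv ℝ u (L 0))).comp_hasDerivAt 0 hcomp
    have hval : ∑ i : Fin n, ∑ j : Fin n, v i * v j * pd2 n i j u x
        = fderiv ℝ (fderiv ℝ u) x v v := by
      rw [bilin_expand (fderiv ℝ (fderiv ℝ u) x) v]
      exact Finset.sum_congr rfl fun i _ => Finset.sum_congr rfl fun j _ => by
        rw [pd2_eq hu]
    rw [hval]
    exact happ

lemma w_line_structure {n : ℕ} {x : Euc n} (v : Euc n) (hx : x ≠ 0) {α : ℝ} (hα : 0 < α) :
    ∃ d : ℝ → ℝ, ∃ Qw : ℝ,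
      (∀ᶠ t in 𝓝 (0:ℝ), HasDerivAt (fun s => ‖x + s • v‖ ^ (-α)) (d t) t) ∧
      HasDerivAt d Qw 0 ∧
      -α * ‖x‖ ^ (-α - 2) * ‖v‖ ^ 2 ≤ Qw := by
  have hxn : 0 < ‖x‖ := norm_pos_iff.mpr hx
  set a : ℝ := ‖x‖ ^ 2 with ha
  set b : ℝ := 2 * (inner ℝ x v : ℝ) with hb
  set c : ℝ := ‖v‖ ^ 2 with hc
  set e : ℝ := -α / 2 with he
  set Q : ℝ → ℝ := fun t => a + b * t + c * t ^ 2 with hQdef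
  have ha0 : 0 < a := by rw [ha]; positivity
  have hQ : ∀ t, ‖x + t • v‖ ^ 2 = Q t := by
    intro t
    rw [norm_add_sq_real, real_inner_smul_right, norm_smul]
    simp only [Real.norm_eq_abs, mul_pow, sq_abs]
    simp only [hQdef, ha, hb, hc]
    ring
  have h2e' : ((2:ℕ):ℝ) * e = -α := by rw [he]; push_cast; ring
  have h2e : ((2:ℕ):ℝ) * (e - 1) = -α - 2 := by rw [he]; push_cast; ring
  have hfun : (fun s => ‖x + s • v‖ ^ (-α)) = fun s => Q s ^ e := by
    funext s
    rw [← hQ s, ← Real.rpow_natCast ‖x + s • v‖ 2, ← Real.rpow_mul (norm_nonneg _), h2e']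
  have hQd : ∀ t, HasDerivAt Q (b + 2 * c * t) t := by
    intro t
    have h1 : HasDerivAt (fun t : ℝ => a + b * t) b t := by
      simpa using ((hasDerivAt_id t).const_mul b).const_add a
    have h2 : HasDerivAt (fun t : ℝ => c * t ^ 2) (c * (2 * t)) t := by
      simpa using (hasDerivAt_pow 2 t).const_mul c
    have h3 := h1.add h2
    exact h3.congr_deriv (by ring)
  have hQ00 : Q 0 = a := by simp [hQdef]
  have hQpos : ∀ᶠ t in 𝓝 (0:ℝ), 0 < Q t := by
    have hc' : ContinuousAt Q 0 := by fun_prop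
    have := hc'.eventually_mem (s := Set.Ioi (0:ℝ)) (by rw [hQ00]; exact isOpen_Ioi.mem_nhds ha0)
    filter_upwards [this] with t ht using ht
  set d : ℝ → ℝ := fun t => (b + 2 * c * t) * e * Q t ^ (e - 1) with hd
  have hstep1 : ∀ᶠ t in 𝓝 (0:ℝ), HasDerivAt (fun s => Q s ^ e) (d t) t := by
    filter_upwards [hQpos] with t ht
    exact (hQd t).rpow_const (Or.inl (ne_of_gt ht))
  have hfirst : HasDerivAt (fun t : ℝ => (b + 2 * c * t) * e) (2 * c * e) 0 := by
    have h2 : HasDerivAt (fun t : ℝ => b + 2 * c * t) (2 * c) 0 := by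
      simpa using ((hasDerivAt_id (0:ℝ)).const_mul (2*c)).const_add b
    simpa using h2.mul_const e
  have hsecond : HasDerivAt (fun t => Q t ^ (e - 1)) (b * (e - 1) * a ^ (e - 1 - 1)) 0 := by
    have := (hQd 0).rpow_const (p := e - 1) (Or.inl (by rw [hQ00]; exact ne_of_gt ha0))
    simpa [hQ00] using this
  have hd2 : HasDerivAt d
      (2 * c * e * a ^ (e - 1) + (b + 2 * c * 0) * e * (b * (e - 1) * a ^ (e - 1 - 1))) 0 := by
    have := hfirst.mul hsecond
    simpa [hQ00, hd, Pi.mul_def] using this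
  refine ⟨d, _, by rw [hfun]; exact hstep1, hd2, ?_⟩
  have hnorm : a ^ (e - 1) = ‖x‖ ^ (-α - 2) := by
    rw [ha, ← Real.rpow_natCast ‖x‖ 2, ← Real.rpow_mul (norm_nonneg _), h2e]
  have hterm1 : 2 * c * e * a ^ (e - 1) = -α * ‖x‖ ^ (-α - 2) * c := by
    rw [← hnorm, he]; ring
  have hterm2 : 0 ≤ (b + 2 * c * 0) * e * (b * (e - 1) * a ^ (e - 1 - 1)) := by
    have h1 : (0:ℝ) < a ^ (e - 1 - 1) := Real.rpow_pos_of_pos ha0 _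
    have h2 : (0:ℝ) < e * (e - 1) := by rw [he]; nlinarith
    have h3 : (b + 2 * c * 0) * e * (b * (e - 1) * a ^ (e - 1 - 1))
        = (e * (e - 1)) * (b * b) * a ^ (e - 1 - 1) := by ring
    rw [h3]
    exact mul_nonneg (mul_nonneg h2.le (mul_self_nonneg b)) h1.le
  have hcc : -α * ‖x‖ ^ (-α - 2) * c = -α * ‖x‖ ^ (-α - 2) * ‖v‖ ^ 2 := by rw [hc]
  linarith [hterm1, hterm2]

lemma trace_eigen_expand {n : ℕ} {M A : Matrix (Fin n) (Fin n) ℝ} (hM : M.IsHermitian) :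
    (A * M).trace = ∑ k, hM.eigenvalues k *
      ((⇑(hM.eigenvectorBasis k)) ⬝ᵥ (A *ᵥ ⇑(hM.eigenvectorBasis k))) := by
  set U : Matrix (Fin n) (Fin n) ℝ := (hM.eigenvectorUnitary : Matrix (Fin n) (Fin n) ℝ) with hU
  set D : Matrix (Fin n) (Fin n) ℝ := Matrix.diagonal (RCLike.ofReal ∘ hM.eigenvalues) with hD
  have hspec : M = U * D * star U := hM.spectral_theorem
  conv_lhs => rw [hspec]
  have h1 : A * (U * D * star U) = (A * U) * (D * star U) := by
    simp [Matrix.mul_assoc]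
  rw [h1, Matrix.trace_mul_comm, Matrix.mul_assoc, ← Matrix.mul_assoc]
  rw [Matrix.trace]
  refine Finset.sum_congr rfl fun k _ => ?_
  simp only [Matrix.diag_apply, Matrix.mul_apply, hD, Matrix.diagonal_apply,
    Matrix.star_apply, star_trivial, ite_mul, zero_mul, Finset.sum_ite_eq,
    Finset.mem_univ, if_true, Function.comp_apply, dotProduct, Matrix.mulVec]
  rw [Finset.mul_sum]
  refine Finset.sum_congr rfl fun x _ => ?_
  simp only [hU, Matrix.IsHermitian.eigenvectorUnitary_apply]
  show (RCLike.ofReal (hM.eigenvalues k) : ℝ) * (hM.eigenvectorBasis k) x *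
    (∑ j, A x j * (hM.eigenvectorBasis k) j) = hM.eigenvalues k *
      ((hM.eigenvectorBasis k) x * ∑ j, A x j * (hM.eigenvectorBasis k) j)
  simp [RCLike.ofReal]
  ring

lemma qf_le_of_eigen_le {n : ℕ} {M : Matrix (Fin n) (Fin n) ℝ} (hM : M.IsHermitian) {K : ℝ}
    (hlamK : ∀ k, hM.eigenvalues k ≤ K) (v : Fin n → ℝ) :
    v ⬝ᵥ M *ᵥ v ≤ K * (v ⬝ᵥ v) := by
  set U : Matrix (Fin n) (Fin n) ℝ := (hM.eigenvectorUnitary : Matrix (Fin n) (Fin n) ℝ) with hU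
  set D : Matrix (Fin n) (Fin n) ℝ := Matrix.diagonal (RCLike.ofReal ∘ hM.eigenvalues) with hD
  have hspec : M = U * D * star U := hM.spectral_theorem
  set y : Fin n → ℝ := star U *ᵥ v with hy
  have hyv : y = v ᵥ* U := by
    rw [hy, Matrix.star_eq_conjTranspose, Matrix.conjTranspose_eq_transpose_of_trivial,
      Matrix.mulVec_transpose]
  have hq : v ⬝ᵥ M *ᵥ v = y ⬝ᵥ D *ᵥ y := by
    rw [hspec, ← Matrix.mulVec_mulVec, ← Matrix.mulVec_mulVec, Matrix.dotProduct_mulVec, ← hyv, hy]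
  have hyy : y ⬝ᵥ y = v ⬝ᵥ v := by
    have hUU : U * star U = 1 := Matrix.mem_unitaryGroup_iff.mp hM.eigenvectorUnitary.2
    conv_lhs => rw [hyv]
    rw [← Matrix.dotProduct_mulVec, ← hyv, hy, Matrix.mulVec_mulVec, hUU, Matrix.one_mulVec]
  rw [hq, ← hyy]
  have hDy : D *ᵥ y = fun k => hM.eigenvalues k * y k := by
    funext k
    simp [hD, Matrix.mulVec_diagonal, RCLike.ofReal]
  rw [hDy]
  rw [dotProduct, dotProduct, Finset.mul_sum]
  refine Finset.sum_le_sum fun k _ => ?_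
  have := hlamK k
  nlinarith [sq_nonneg (y k)]

lemma qf_upper_bound {n : ℕ} (hn : 1 ≤ n) {M A : Matrix (Fin n) (Fin n) ℝ} {CE c K : ℝ}
    (hCE : 1 ≤ CE) (hc : 0 < c)
    (hM : M.IsHermitian)
    (hMlow : ∀ v : Fin n → ℝ, -c * (v ⬝ᵥ v) ≤ v ⬝ᵥ M *ᵥ v)
    (hAlow : ∀ v : Fin n → ℝ, (1/CE) * (v ⬝ᵥ v) ≤ v ⬝ᵥ A *ᵥ v)
    (hAhigh : ∀ v : Fin n → ℝ, v ⬝ᵥ A *ᵥ v ≤ CE * (v ⬝ᵥ v))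
    (htr : (A * M).trace ≤ 2 * CE)
    (hK : K = CE^2 * (((n:ℝ)-1) * c + 2)) :
    ∀ v : Fin n → ℝ, v ⬝ᵥ M *ᵥ v ≤ K * (v ⬝ᵥ v) := by
  have hCE0 : (0:ℝ) < CE := lt_of_lt_of_le one_pos hCE
  have hn1 : (1:ℝ) ≤ (n:ℝ) := by exact_mod_cast hn
  have hK0 : 0 ≤ K := by
    rw [hK]; nlinarith [sq_nonneg CE, mul_nonneg (sub_nonneg.mpr hn1) hc.le]
  classical
  set lam := hM.eigenvalues with hlam
  set bas := hM.eigenvectorBasis with hbas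
  set u : Fin n → (Fin n → ℝ) := fun k => ⇑(bas k) with hu
  have hunit : ∀ k, (u k) ⬝ᵥ (u k) = 1 := by
    intro k
    have h1 : ((u k) ⬝ᵥ (u k)) = (inner ℝ (bas k) (bas k) : ℝ) := by
      simp [hu, dotProduct, PiLp.inner_apply, RCLike.inner_apply, mul_comm]
      have := bas.orthonormal.1 k
      rw [EuclideanSpace.norm_eq] at this
      simpa [pow_two] using this
    rw [h1, real_inner_self_eq_norm_sq, hM.eigenvectorBasis.orthonormal.1 k]
    norm_num
  have heig : ∀ k, lam k = (u k) ⬝ᵥ (M *ᵥ u k) := by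
    intro k
    have := hM.eigenvalues_eq k
    simpa [hu, hbas, hlam] using this
  have hlamlow : ∀ k, -c ≤ lam k := by
    intro k
    have := hMlow (u k)
    rw [hunit k] at this
    simpa [heig k] using this
  set a : Fin n → ℝ := fun k => (u k) ⬝ᵥ (A *ᵥ u k) with haf
  have halow : ∀ k, 1/CE ≤ a k := fun k => by
    have := hAlow (u k); rw [hunit k] at this; simpa using this
  have hahigh : ∀ k, a k ≤ CE := fun k => by
    have := hAhigh (u k); rw [hunit k] at this; simpa using this
  have htr_id : (A * M).trace = ∑ k, lam k * a k := trace_eigen_expand hM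
  have hlamK : ∀ k, lam k ≤ K := by
    intro k
    have hterm : ∀ j, -(c*CE) ≤ lam j * a j := by
      intro j
      rcases le_or_gt 0 (lam j) with h | h
      · have : 0 ≤ lam j * a j := mul_nonneg h (le_trans (by positivity) (halow j))
        nlinarith
      · have h1 : lam j * CE ≤ lam j * a j := by
          have := hahigh j
          nlinarith
        nlinarith [hlamlow j]
    have hsum : ∑ j ∈ Finset.univ.erase k, lam j * a j + lam k * a k = ∑ j, lam j * a j :=
      Finset.sum_erase_add _ _ (Finset.mem_univ k)
    have hcard : ((Finset.univ.erase k).card : ℝ) = (n:ℝ) - 1 := by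
      rw [Finset.card_erase_of_mem (Finset.mem_univ k)]
      simp
      rw [Nat.cast_sub hn]
      simp
    have hlow : ((n:ℝ)-1) * (-(c*CE)) ≤ ∑ j ∈ Finset.univ.erase k, lam j * a j := by
      have := Finset.sum_le_sum (f := fun _ => -(c*CE)) (g := fun j => lam j * a j)
        (fun j _ => hterm j) (s := Finset.univ.erase k)
      rw [Finset.sum_const, nsmul_eq_mul, hcard] at this
      exact this
    have hak : lam k * a k ≤ 2*CE + ((n:ℝ)-1) * (c*CE) := by
      rw [htr_id] at htr
      nlinarith [hsum, hlow]
    rcases le_or_gt (lam k) 0 with h | h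
    · linarith
    · have h1 : lam k * (1/CE) ≤ lam k * a k := by
        have := halow k
        nlinarith
      rw [hK]
      have h2 : lam k * (1/CE) ≤ 2*CE + ((n:ℝ)-1) * (c*CE) := le_trans h1 hak
      have h3 : lam k / CE ≤ 2*CE + ((n:ℝ)-1) * (c*CE) := by rw [div_eq_mul_one_div]; exact h2
      rw [div_le_iff₀ hCE0] at h3
      nlinarith
  exact qf_le_of_eigen_le hM hlamK

lemma qf_single {n : ℕ} (M : Matrix (Fin n) (Fin n) ℝ) (i j : Fin n) :
    Pi.single i (1:ℝ) ⬝ᵥ M *ᵥ Pi.single j (1:ℝ) = M i j := by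
  rw [Matrix.mulVec_single, single_dotProduct]
  simp

lemma qf_bilin {n : ℕ} (M : Matrix (Fin n) (Fin n) ℝ) (u v : Fin n → ℝ) :
    (u + v) ⬝ᵥ M *ᵥ (u + v) =
      u ⬝ᵥ M *ᵥ u + u ⬝ᵥ M *ᵥ v + v ⬝ᵥ M *ᵥ u + v ⬝ᵥ M *ᵥ v := by
  rw [Matrix.mulVec_add, add_dotProduct, dotProduct_add, dotProduct_add]
  ring

lemma qf_bilin_sub {n : ℕ} (M : Matrix (Fin n) (Fin n) ℝ) (u v : Fin n → ℝ) :
    (u - v) ⬝ᵥ M *ᵥ (u - v) =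
      u ⬝ᵥ M *ᵥ u - u ⬝ᵥ M *ᵥ v - v ⬝ᵥ M *ᵥ u + v ⬝ᵥ M *ᵥ v := by
  rw [Matrix.mulVec_sub, sub_dotProduct, dotProduct_sub, dotProduct_sub]
  ring

lemma entry_bound {n : ℕ} {M : Matrix (Fin n) (Fin n) ℝ} {cl B : ℝ}
    (hcB : cl ≤ B)
    (hsym : ∀ i j, M i j = M j i)
    (hlow : ∀ v : Fin n → ℝ, -cl * (v ⬝ᵥ v) ≤ v ⬝ᵥ M *ᵥ v)
    (hhigh : ∀ v : Fin n → ℝ, v ⬝ᵥ M *ᵥ v ≤ B * (v ⬝ᵥ v)) :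
    ∀ i j, |M i j| ≤ B := by
  intro i j
  have hsingle : ∀ k l : Fin n, (Pi.single k (1:ℝ)) ⬝ᵥ (Pi.single l (1:ℝ)) =
      if k = l then 1 else 0 := by
    intro k l
    rw [single_dotProduct]
    simp [Pi.single_apply, eq_comm]
  rcases eq_or_ne i j with rfl | hij
  · have h1 := hlow (Pi.single i 1)
    have h2 := hhigh (Pi.single i 1)
    rw [qf_single, hsingle] at h1 h2
    simp at h1 h2
    rw [abs_le]
    constructor <;> linarith
  · set u : Fin n → ℝ := Pi.single i (1:ℝ) with hu
    set v : Fin n → ℝ := Pi.single j (1:ℝ) with hv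
    have huv : u ⬝ᵥ v = 0 := by rw [hsingle]; simp [hij]
    have hvu : v ⬝ᵥ u = 0 := by rw [hsingle]; simp [Ne.symm hij]
    have huu : u ⬝ᵥ u = 1 := by rw [hsingle]; simp
    have hvv : v ⬝ᵥ v = 1 := by rw [hsingle]; simp
    have hpp : (u+v) ⬝ᵥ (u+v) = 2 := by
      rw [add_dotProduct, dotProduct_add, dotProduct_add,
        huv, hvu, huu, hvv]
      ring
    have hmm : (u-v) ⬝ᵥ (u-v) = 2 := by
      rw [sub_dotProduct, dotProduct_sub, dotProduct_sub,
        huv, hvu, huu, hvv]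
      ring
    have h1 := hhigh (u + v)
    have h2 := hlow (u + v)
    have h3 := hhigh (u - v)
    have h4 := hlow (u - v)
    rw [qf_bilin, hpp] at h1 h2
    rw [qf_bilin_sub, hmm] at h3 h4
    rw [qf_single, qf_single, qf_single, qf_single] at h1 h2 h3 h4
    have hs := hsym i j
    rw [abs_le]
    constructor <;> nlinarith

lemma dot_expand {n : ℕ} (M : Matrix (Fin n) (Fin n) ℝ) (v : Fin n → ℝ) :
    v ⬝ᵥ M *ᵥ v = ∑ i, ∑ j, v i * v j * M i j := by
  simp only [dotProduct, Matrix.mulVec, Finset.mul_sum]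
  exact Finset.sum_congr rfl fun i _ => Finset.sum_congr rfl fun j _ => by ring

lemma euc_norm_sq {n : ℕ} (v : Euc n) : ‖v‖ ^ 2 = ∑ i, v i ^ 2 := by
  rw [EuclideanSpace.norm_eq, Real.sq_sqrt (by positivity)]
  exact Finset.sum_congr rfl fun i _ => by rw [Real.norm_eq_abs, sq_abs]

/-- Corollary 2.12: uniform Hessian bound when `δ ≤ r₀^{α+2}/α`. -/
theorem uniform_hessian_bound
    (n : ℕ) (hn : 2 ≤ n) (CE CS : ℝ) (hCE : 1 ≤ CE) (hCS : 0 < CS)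
    (r₀ r₁ : ℝ) (hr₀ : 0 < r₀) (hr₁ : 0 < r₁) (hr₁r₀ : r₁ ≤ r₀) (h3r₀ : 3 * r₀ ≤ 1)
    (x₁ : Euc n) (hx₁ : ‖x₁‖ = 2 * r₀)
    (α δ : ℝ) (hα : 0 < α) (hδ : 0 < δ) (hδα : δ ≤ r₀ ^ (α + 2) / α)
    (w : Euc n → ℝ) (hw : ∀ x, w x = ‖x‖ ^ (-α))
    (xst : Euc n) (hxst : xst ∈ Metric.ball x₁ r₁)
    (φ₀ φ₁ : Euc n → ℝ) (hφ₀ : ContDiffAt ℝ 2 φ₀ xst) (hφ₁ : ContDiffAt ℝ 2 φ₁ xst)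
    (hmax : IsLocalMax (fun x => (φ₁ x - φ₀ x) + δ * w x) xst)
    (hhess₁ : (hessM n φ₁ xst + CS • (1 : Matrix (Fin n) (Fin n) ℝ)).PosSemidef)
    (hA : ∃ A : Matrix (Fin n) (Fin n) ℝ, A.IsSymm ∧
      (A - (1 / CE) • (1 : Matrix (Fin n) (Fin n) ℝ)).PosSemidef ∧
      (CE • (1 : Matrix (Fin n) (Fin n) ℝ) - A).PosSemidef ∧
      (A * hessM n φ₀ xst).trace ≤ 2 * CE) :
    hessMax n φ₀ xst + hessMax n φ₁ xst ≤
      2 * (CE ^ 2 * (((n : ℝ) - 1) * (CS + 1) + 2) + 1) := by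
  have hwfun : w = fun y => ‖y‖ ^ (-α) := funext hw
  subst hwfun
  -- geometry
  have hxnorm : r₀ ≤ ‖xst‖ := by
    have hd : ‖x₁ - xst‖ < r₁ := by
      rw [Metric.mem_ball, dist_eq_norm] at hxst
      rwa [norm_sub_rev]
    have htri : ‖x₁‖ ≤ ‖xst‖ + ‖x₁ - xst‖ := by
      have hxx : xst + (x₁ - xst) = x₁ := by abel
      calc ‖x₁‖ = ‖xst + (x₁ - xst)‖ := by rw [hxx]
        _ ≤ ‖xst‖ + ‖x₁ - xst‖ := norm_add_le _ _
    rw [hx₁] at htri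
    linarith
  have hxne : xst ≠ 0 := by
    intro h
    rw [h, norm_zero] at hxnorm
    linarith
  -- key line inequality
  have key : ∀ v : Euc n, ∃ Qw : ℝ,
      -α * ‖xst‖ ^ (-α - 2) * ‖v‖ ^ 2 ≤ Qw ∧
      (∑ i, ∑ j, v i * v j * pd2 n i j φ₁ xst)
        - (∑ i, ∑ j, v i * v j * pd2 n i j φ₀ xst) + δ * Qw ≤ 0 := by
    intro v
    obtain ⟨d₀, h₀ev, h₀der⟩ := line_structure hφ₀ v
    obtain ⟨d₁, h₁ev, h₁der⟩ := line_structure hφ₁ v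
    obtain ⟨dw, Qw, hwev, hwder, hwbound⟩ := w_line_structure v hxne hα
    have hLc : Continuous (fun t : ℝ => xst + t • v) :=
      continuous_const.add (continuous_id.smul continuous_const)
    have hL0' : (fun t : ℝ => xst + t • v) 0 = xst := by simp
    have hLt : Filter.Tendsto (fun t : ℝ => xst + t • v) (nhds 0) (nhds xst) := by
      have h : ContinuousAt (fun t : ℝ => xst + t • v) 0 := hLc.continuousAt
      simpa [ContinuousAt] using h
    have hmaxE : ∀ᶠ y in nhds xst,
        (φ₁ y - φ₀ y) + δ * ‖y‖ ^ (-α) ≤ (φ₁ xst - φ₀ xst) + δ * ‖xst‖ ^ (-α) := hmax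
    have hmax' : IsLocalMax
        (fun t : ℝ => (φ₁ (xst + t • v) - φ₀ (xst + t • v)) + δ * ‖xst + t • v‖ ^ (-α)) 0 := by
      unfold IsLocalMax IsMaxFilter
      filter_upwards [hLt.eventually hmaxE] with t ht
      simpa using ht
    have hevd : ∀ᶠ t in nhds (0:ℝ), HasDerivAt
        (fun s : ℝ => (φ₁ (xst + s • v) - φ₀ (xst + s • v)) + δ * ‖xst + s • v‖ ^ (-α))
        (d₁ t - d₀ t + δ * dw t) t := by
      filter_upwards [h₀ev, h₁ev, hwev] with t ht0 ht1 htw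
      exact (ht1.sub ht0).add (htw.const_mul δ)
    have hder : HasDerivAt (fun t => d₁ t - d₀ t + δ * dw t)
        ((∑ i, ∑ j, v i * v j * pd2 n i j φ₁ xst)
          - (∑ i, ∑ j, v i * v j * pd2 n i j φ₀ xst) + δ * Qw) 0 :=
      (h₁der.sub h₀der).add (hwder.const_mul δ)
    exact ⟨Qw, hwbound, snd_deriv_nonpos_at_localMax hevd hder hmax'⟩
  -- δ·Qw ≥ -‖v‖²
  have hδQ : ∀ v : Euc n, δ * (-α * ‖xst‖ ^ (-α - 2) * ‖v‖ ^ 2) ≥ -‖v‖^2 := by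
    intro v
    have hδα' : δ * α ≤ r₀ ^ (α + 2) := by
      rw [le_div_iff₀ hα] at hδα
      exact hδα
    have h2 : r₀ ^ (α + 2) ≤ ‖xst‖ ^ (α + 2) :=
      Real.rpow_le_rpow hr₀.le hxnorm (by linarith)
    have hxp : (0:ℝ) < ‖xst‖ ^ (α + 2) :=
      Real.rpow_pos_of_pos (lt_of_lt_of_le hr₀ hxnorm) _
    have h3 : ‖xst‖ ^ (-α - 2) = (‖xst‖ ^ (α + 2))⁻¹ := by
      rw [show -α - 2 = -(α + 2) by ring, Real.rpow_neg (norm_nonneg _)]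
    have h4 : δ * α * ‖xst‖ ^ (-α - 2) ≤ 1 := by
      rw [h3]
      calc δ * α * (‖xst‖ ^ (α+2))⁻¹
          ≤ ‖xst‖ ^ (α+2) * (‖xst‖ ^ (α+2))⁻¹ :=
            mul_le_mul_of_nonneg_right (le_trans hδα' h2) (inv_nonneg.mpr hxp.le)
        _ = 1 := mul_inv_cancel₀ (ne_of_gt hxp)
    have hnn : (0:ℝ) ≤ ‖v‖ ^ 2 := sq_nonneg _
    nlinarith [h4, hnn]
  -- matrix data
  classical
  set M₀ : Matrix (Fin n) (Fin n) ℝ := hessM n φ₀ xst with hM₀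
  set M₁ : Matrix (Fin n) (Fin n) ℝ := hessM n φ₁ xst with hM₁
  set c : ℝ := CS + 1 with hcdef
  set K : ℝ := CE ^ 2 * (((n:ℝ) - 1) * c + 2) with hKdef
  have hn1 : (1:ℝ) ≤ (n:ℝ) := by exact_mod_cast le_trans one_le_two hn
  have hc0 : (0:ℝ) < c := by rw [hcdef]; linarith
  have hcK : c ≤ K := by
    have hn2 : (2:ℝ) ≤ (n:ℝ) := by exact_mod_cast hn
    have hCE2 : (1:ℝ) ≤ CE^2 := by nlinarith
    have hnc : c ≤ ((n:ℝ)-1) * c := by nlinarith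
    rw [hKdef]
    nlinarith
  have hsymmapp : ∀ (v0 : Fin n → ℝ) (i : Fin n),
      ((WithLp.equiv 2 (Fin n → ℝ)).symm v0) i = v0 i := fun _ _ => rfl
  -- quadratic form bounds from hhess₁
  have hM1low : ∀ v0 : Fin n → ℝ, -CS * (v0 ⬝ᵥ v0) ≤ v0 ⬝ᵥ M₁ *ᵥ v0 := by
    intro v0
    have := hhess₁.dotProduct_mulVec_nonneg v0
    rw [Matrix.add_mulVec, dotProduct_add] at this
    have hsid : (star v0) = v0 := by
      funext i; simp
    rw [hsid] at this
    have h2 : v0 ⬝ᵥ (CS • (1 : Matrix (Fin n) (Fin n) ℝ)) *ᵥ v0 = CS * (v0 ⬝ᵥ v0) := by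
      rw [Matrix.smul_mulVec, Matrix.one_mulVec, dotProduct_smul, smul_eq_mul]
    rw [h2] at this
    linarith
  -- two directional inequalities, coordinates
  have hkey : ∀ v0 : Fin n → ℝ,
      (v0 ⬝ᵥ M₁ *ᵥ v0) - (v0 ⬝ᵥ M₀ *ᵥ v0) ≤ v0 ⬝ᵥ v0 := by
    intro v0
    set v : Euc n := (WithLp.equiv 2 (Fin n → ℝ)).symm v0 with hvdef
    obtain ⟨Qw, hQlow, hQkey⟩ := key v
    have hδ1 := hδQ v
    simp only [hvdef, hsymmapp] at hQkey hQlow hδ1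
    have hnv : ‖v‖ ^ 2 = v0 ⬝ᵥ v0 := by
      rw [euc_norm_sq]
      simp only [hvdef, hsymmapp]
      simp [dotProduct, pow_two]
    simp only [hvdef] at hnv
    rw [hnv] at hδ1 hQlow
    have h1 : -(v0 ⬝ᵥ v0) ≤ δ * Qw := by
      have h2 : δ * (-α * ‖xst‖ ^ (-α - 2) * (v0 ⬝ᵥ v0)) ≤ δ * Qw :=
        mul_le_mul_of_nonneg_left hQlow hδ.le
      linarith
    rw [dot_expand M₁ v0, dot_expand M₀ v0]
    have hEq1 : (∑ i, ∑ j, v0 i * v0 j * M₁ i j)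
        = ∑ i : Fin n, ∑ j : Fin n, v0 i * v0 j * pd2 n i j φ₁ xst := rfl
    have hEq0 : (∑ i, ∑ j, v0 i * v0 j * M₀ i j)
        = ∑ i : Fin n, ∑ j : Fin n, v0 i * v0 j * pd2 n i j φ₀ xst := rfl
    rw [hEq1, hEq0]
    linarith
  -- M₀ lower bound
  have hM0low : ∀ v0 : Fin n → ℝ, -c * (v0 ⬝ᵥ v0) ≤ v0 ⬝ᵥ M₀ *ᵥ v0 := by
    intro v0
    have h1 := hkey v0
    have h2 := hM1low v0
    rw [hcdef]
    linarith
  -- A quadratic form bounds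
  obtain ⟨A, hAsymm, hA1, hA2, htr⟩ := hA
  have hAlow : ∀ v0 : Fin n → ℝ, (1/CE) * (v0 ⬝ᵥ v0) ≤ v0 ⬝ᵥ A *ᵥ v0 := by
    intro v0
    have := hA1.dotProduct_mulVec_nonneg v0
    have hsid : (star v0) = v0 := by funext i; simp
    rw [hsid, Matrix.sub_mulVec, dotProduct_sub, Matrix.smul_mulVec,
      Matrix.one_mulVec, dotProduct_smul, smul_eq_mul] at this
    linarith
  have hAhigh : ∀ v0 : Fin n → ℝ, v0 ⬝ᵥ A *ᵥ v0 ≤ CE * (v0 ⬝ᵥ v0) := by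
    intro v0
    have := hA2.dotProduct_mulVec_nonneg v0
    have hsid : (star v0) = v0 := by funext i; simp
    rw [hsid, Matrix.sub_mulVec, dotProduct_sub, Matrix.smul_mulVec,
      Matrix.one_mulVec, dotProduct_smul, smul_eq_mul] at this
    linarith
  -- symmetry / hermitian
  have hsym0 : ∀ i j, M₀ i j = M₀ j i := fun i j => pd2_symm hφ₀ i j
  have hsym1 : ∀ i j, M₁ i j = M₁ j i := fun i j => pd2_symm hφ₁ i j
  have hherm0 : M₀.IsHermitian := by
    unfold Matrix.IsHermitian
    ext i j
    rw [Matrix.conjTranspose_apply, star_trivial]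
    exact hsym0 j i
  -- M₀ upper bound
  have hM0high : ∀ v0 : Fin n → ℝ, v0 ⬝ᵥ M₀ *ᵥ v0 ≤ K * (v0 ⬝ᵥ v0) :=
    qf_upper_bound (le_trans one_le_two hn) hCE hc0 hherm0 hM0low hAlow hAhigh htr hKdef
  -- M₁ upper bound
  have hM1high : ∀ v0 : Fin n → ℝ, v0 ⬝ᵥ M₁ *ᵥ v0 ≤ (K + 1) * (v0 ⬝ᵥ v0) := by
    intro v0
    have h1 := hkey v0
    have h2 := hM0high v0
    linarith
  -- entry bounds
  have hE0 : ∀ i j, |M₀ i j| ≤ K := entry_bound hcK hsym0 hM0low hM0high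
  have hE1 : ∀ i j, |M₁ i j| ≤ K + 1 := by
    refine entry_bound (cl := CS) ?_ hsym1 hM1low hM1high
    rw [hcdef] at hcK; linarith
  -- sup bounds
  haveI : Nonempty (Fin n) := ⟨⟨0, by omega⟩⟩
  have hH0 : hessMax n φ₀ xst ≤ K := by
    refine ciSup_le fun i => ciSup_le fun j => ?_
    exact hE0 i j
  have hH1 : hessMax n φ₁ xst ≤ K + 1 := by
    refine ciSup_le fun i => ciSup_le fun j => ?_
    exact hE1 i j
  have hKval : 2 * (CE ^ 2 * (((n : ℝ) - 1) * (CS + 1) + 2) + 1) = 2 * K + 2 := by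
    rw [hKdef, hcdef]; ring
  rw [hKval]
  linarith

end Aux

end
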